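/- Let d = 3, let c_{k,l} ≥ 0 for k, l ∈ ℤ/3ℤ, and define B_m = (1/3) Σ_{k,l,y=0}^{2} ω^{y(k−m)} c_{k,l} |l−y⟩⟨l+y| and F = (1/√3) Σ_{x,y=0}^{2} ω^{−xy} |x⟩⟨y|. Then for every m, k ∈ ℤ/3ℤ, the diagonal entries of F^† B_m F are ⟨k| F^† B_m F |k⟩ = (1/3) Σ_{l=0}^{2} c_{m−k, l}, and in particular they are nonnegative real numbers. -/

import Mathlib

open Matrix BigOperators Complex Kronecker
open scoped ComplexOrder

/-- `ω = exp(2πi/d)`. -/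
noncomputable def omg (d : ℕ) : ℂ := Complex.exp (2 * Real.pi * Complex.I / (d : ℂ))

/-- `ω^x` for `x : ZMod d`. -/
noncomputable def wpow (d : ℕ) [NeZero d] (x : ZMod d) : ℂ := omg d ^ x.val

/-- The block `B_m = (1/d) Σ_{k,l,y} ω^{y(k-m)} c_{k,l} |l-y⟩⟨l+y|`. -/
noncomputable def Bblock (d : ℕ) [NeZero d] (c : ZMod d → ZMod d → ℂ) (m : ZMod d) :
    Matrix (ZMod d) (ZMod d) ℂ :=
  Matrix.of fun a b =>
    (1 / (d : ℂ)) * ∑ k : ZMod d, ∑ l : ZMod d, ∑ y : ZMod d,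
      wpow d (y * (k - m)) * c k l * (if a = l - y ∧ b = l + y then 1 else 0)

/-- Discrete Fourier matrix `F = (1/√d) Σ_{x,y} ω^{-xy} |x⟩⟨y|`. -/
noncomputable def Fmat (d : ℕ) [NeZero d] : Matrix (ZMod d) (ZMod d) ℂ :=
  Matrix.of fun x y => ((1 / Real.sqrt d : ℝ) : ℂ) * wpow d (-(x * y))

lemma sum3' (f : ZMod 3 → ℂ) : ∑ x, f x = f 0 + f 1 + f 2 := by
  show ∑ x : Fin 3, f x = _
  exact Fin.sum_univ_three f

lemma omg3_pow : omg 3 ^ 3 = 1 := by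
  rw [omg, ← Complex.exp_nat_mul]
  rw [show ((3:ℕ):ℂ) * (2 * Real.pi * Complex.I / ((3:ℕ):ℂ)) = 2 * Real.pi * Complex.I by
    push_cast; ring]
  exact Complex.exp_two_pi_mul_I

lemma omg3_conj : (starRingEnd ℂ) (omg 3) = omg 3 ^ 2 := by
  have : (starRingEnd ℂ) (omg 3) = (omg 3)⁻¹ := by
    rw [omg, ← Complex.exp_conj, ← Complex.exp_neg]
    congr 1
    simp [map_div₀, Complex.conj_I, map_ofNat]
    ring
  rw [this, eq_comm]
  refine eq_inv_of_mul_eq_one_left ?_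
  rw [← pow_succ]; exact omg3_pow

lemma omg3_sum : 1 + omg 3 + omg 3 ^ 2 = 0 := by
  have h : IsPrimitiveRoot (omg 3) 3 := by
    have := Complex.isPrimitiveRoot_exp 3 (by norm_num)
    rwa [omg]
  have := h.geom_sum_eq_zero (by norm_num)
  rw [Finset.sum_range_succ, Finset.sum_range_succ, Finset.sum_range_one] at this
  simpa using this

lemma wpow_eval (x : ZMod 3) :
    wpow 3 x = if x = 0 then 1 else if x = 1 then omg 3 else omg 3 ^ 2 := by
  rcases (show ∀ z : ZMod 3, z = 0 ∨ z = 1 ∨ z = 2 by decide) x with h|h|h <;> subst h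
  · rw [if_pos rfl, wpow, show (ZMod.val (0:ZMod 3)) = 0 by decide, pow_zero]
  · rw [if_neg (by decide), if_pos rfl, wpow, show (ZMod.val (1:ZMod 3)) = 1 by decide, pow_one]
  · rw [if_neg (by decide), if_neg (by decide), wpow,
      show (ZMod.val (2:ZMod 3)) = 2 by decide]

set_option maxHeartbeats 3000000 in
/-- For `d = 3` and nonnegative coefficients `c`, the diagonal entries of `F^† B_m F` are
`⟨k|F^† B_m F|k⟩ = (1/3) Σ_l c_{m-k,l}`, nonnegative real numbers. -/
theorem stmt17 (c : ZMod 3 → ZMod 3 → ℝ) (hc : ∀ k l, 0 ≤ c k l) :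
    ∀ m k : ZMod 3,
      ((Fmat 3)ᴴ * Bblock 3 (fun k l => (c k l : ℂ)) m * Fmat 3) k k =
        (((1 / 3 : ℝ) * ∑ l : ZMod 3, c (m - k) l : ℝ) : ℂ) ∧
      0 ≤ (1 / 3 : ℝ) * ∑ l : ZMod 3, c (m - k) l := by
  have hz3 : omg 3 ^ 3 = 1 := omg3_pow
  have hz2 : omg 3 ^ 2 = -1 - omg 3 := by linear_combination omg3_sum
  have hz4 : omg 3 ^ 4 = omg 3 := by linear_combination omg 3 * omg3_pow
  have hz5 : omg 3 ^ 5 = -1 - omg 3 := by linear_combination (omg 3 ^ 2) * omg3_pow + omg3_sum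
  have hz6 : omg 3 ^ 6 = 1 := by linear_combination (omg 3 ^ 3 + 1) * omg3_pow
  have hz7 : omg 3 ^ 7 = omg 3 := by linear_combination (omg 3 ^ 4 + omg 3) * omg3_pow
  have ha : ((Real.sqrt 3 : ℝ) : ℂ)⁻¹ ^ 2 = 1/3 := by
    rw [← Complex.ofReal_inv, ← Complex.ofReal_pow, inv_pow,
      Real.sq_sqrt (by norm_num : (0:ℝ) ≤ 3)]
    norm_num
  intro m k
  constructor
  · rcases (show ∀ z : ZMod 3, z = 0 ∨ z = 1 ∨ z = 2 by decide) m with hm|hm|hm <;> subst hm <;>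
    rcases (show ∀ z : ZMod 3, z = 0 ∨ z = 1 ∨ z = 2 by decide) k with hk|hk|hk <;> subst hk <;>
    · simp (config := { decide := true }) only [Matrix.mul_apply, conjTranspose_apply, Fmat,
        Bblock, of_apply, sum3', wpow_eval, ite_true, ite_false, mul_zero, zero_mul, add_zero,
        zero_add, mul_one, one_mul, and_true, and_false, true_and, false_and, if_true, if_false,
        Complex.star_def, _root_.map_mul, _root_.map_one, map_inv₀, map_pow, map_ofNat,
        omg3_conj, Complex.conj_ofReal, Nat.cast_ofNat,
        Complex.ofReal_mul, Complex.ofReal_div, Complex.ofReal_one, Complex.ofReal_inv,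
        one_div,
        show ((0-0 : ZMod 3)) = 0 by decide, show ((0-1 : ZMod 3)) = 2 by decide,
        show ((0-2 : ZMod 3)) = 1 by decide, show ((1-0 : ZMod 3)) = 1 by decide,
        show ((1-1 : ZMod 3)) = 0 by decide, show ((1-2 : ZMod 3)) = 2 by decide,
        show ((2-0 : ZMod 3)) = 2 by decide, show ((2-1 : ZMod 3)) = 1 by decide,
        show ((2-2 : ZMod 3)) = 0 by decide]
      push_cast
      ring_nf
      simp only [hz3, hz4, hz5, hz6, hz7, ha, hz2, sum3']
      push_cast
      ring_nf
  · apply mul_nonneg (by norm_num)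
    exact Finset.sum_nonneg fun l _ => hc _ _
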